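/- Let H be a separable Hilbert space, {e_n}_{n≥0} a Riesz basis of H with lower and upper frame bounds a, A > 0 (i.e., a‖u‖² ≤ ∑_n |⟨u,e_n⟩|² ≤ A‖u‖² for all u, together with completeness and ℓ²-independence), and {d_n}_{n≥0} ⊂ H with ∑_n ‖d_n - e_n‖² < a²/A. Then {d_n} is complete in H. -/

import Mathlib

theorem stmt_19 {H : Type*} [NormedAddCommGroup H] [InnerProductSpace ℂ H]
    [CompleteSpace H] (e d : ℕ → H) (a A : ℝ) (ha : 0 < a) (hA : 0 < A)
    (hcomplete : ∀ u : H, (∀ n, (inner ℂ u (e n) : ℂ) = 0) → u = 0)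
    (hindep : ∀ c : ℕ → ℂ, Summable (fun n => ‖c n‖ ^ 2) →
      HasSum (fun n => c n • e n) 0 → ∀ n, c n = 0)
    (hframe : ∀ u : H, Summable (fun n => ‖(inner ℂ u (e n) : ℂ)‖ ^ 2) ∧
      a * ‖u‖ ^ 2 ≤ ∑' n, ‖(inner ℂ u (e n) : ℂ)‖ ^ 2 ∧
      ∑' n, ‖(inner ℂ u (e n) : ℂ)‖ ^ 2 ≤ A * ‖u‖ ^ 2)
    (hd : Summable fun n => ‖d n - e n‖ ^ 2)
    (hlt : ∑' n, ‖d n - e n‖ ^ 2 < a ^ 2 / A) :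
    ∀ u : H, (∀ n, (inner ℂ u (d n) : ℂ) = 0) → u = 0 := by
  intro u hu
  by_contra hu0
  have hun : u ≠ 0 := hu0
  have hnu : 0 < ‖u‖ ^ 2 := pow_pos (norm_pos_iff.mpr hu0) 2
  obtain ⟨hsum, hlow, hhigh⟩ := hframe u
  -- pointwise bound
  have hpt : ∀ n, ‖(inner ℂ u (e n) : ℂ)‖ ^ 2 ≤ ‖u‖ ^ 2 * ‖d n - e n‖ ^ 2 := by
    intro n
    have : (inner ℂ u (e n) : ℂ) = inner ℂ u (e n - d n) := by
      rw [inner_sub_right, hu n, sub_zero]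
    rw [this]
    have h1 : ‖(inner ℂ u (e n - d n) : ℂ)‖ ≤ ‖u‖ * ‖e n - d n‖ := norm_inner_le_norm _ _
    have h2 : ‖e n - d n‖ = ‖d n - e n‖ := norm_sub_rev _ _
    calc ‖(inner ℂ u (e n - d n) : ℂ)‖ ^ 2 ≤ (‖u‖ * ‖d n - e n‖) ^ 2 := by
            apply pow_le_pow_left₀ (norm_nonneg _); rw [← h2]; exact h1
      _ = ‖u‖ ^ 2 * ‖d n - e n‖ ^ 2 := by ring
  -- sum bound
  have hsum2 : Summable (fun n => ‖u‖ ^ 2 * ‖d n - e n‖ ^ 2) := hd.mul_left _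
  have htsum : ∑' n, ‖(inner ℂ u (e n) : ℂ)‖ ^ 2 ≤ ‖u‖ ^ 2 * ∑' n, ‖d n - e n‖ ^ 2 := by
    rw [← tsum_mul_left]
    exact Summable.tsum_le_tsum hpt hsum hsum2
  have haA : a ≤ A := by
    have := hlow.trans hhigh
    exact le_of_mul_le_mul_right (by simpa [mul_comm] using this) hnu
  have hfrac : a ^ 2 / A ≤ a := by
    rw [div_le_iff₀ hA, pow_two]
    exact mul_le_mul_of_nonneg_left haA ha.le
  have : a * ‖u‖ ^ 2 < a * ‖u‖ ^ 2 := by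
    calc a * ‖u‖ ^ 2 ≤ ∑' n, ‖(inner ℂ u (e n) : ℂ)‖ ^ 2 := hlow
      _ ≤ ‖u‖ ^ 2 * ∑' n, ‖d n - e n‖ ^ 2 := htsum
      _ < ‖u‖ ^ 2 * (a ^ 2 / A) := by exact mul_lt_mul_of_pos_left hlt hnu
      _ ≤ ‖u‖ ^ 2 * a := mul_le_mul_of_nonneg_left hfrac hnu.le
      _ = a * ‖u‖ ^ 2 := mul_comm _ _
  exact lt_irrefl _ this
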